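/- The map Φ : ℂ¹⁰ → ℂ⁵ sending (s₁, …, s₁₀) to (t₁, t₂, t₃, t₄, t₅) = (−s₆, −s₉, s₇, −s₅, −s₈) restricts to a bijection from {(s₁,…,s₁₀) ∈ ℂ¹⁰ | h·S₁₀·S₉·S₈·S₇·S₆·S₅·S₄·S₃·S₂·S₁ = 1} onto {(t₁,…,t₅) ∈ ℂ⁵ | ĥ·Ŝ₅·Ŝ₄·Ŝ₃·Ŝ₂·Ŝ₁ = 1}, where h = !![0,0,1; 1,0,0; 0,1,0], S₁ = 1+s₁E₃₁, S₂ = 1+s₂E₃₂, S₃ = 1+s₃E₁₂, S₄ = 1+s₄E₁₃, S₅ = 1+s₅E₂₃, S₆ = 1+s₆E₂₁, S₇ = 1+s₇E₃₁, S₈ = 1+s₈E₃₂, S₉ = 1+s₉E₁₂, S₁₀ = 1+s₁₀E₁₃, and ĥ = !![0,1;−1,0], Ŝ₁ = !![1,0;t₁,1], Ŝ₂ = !![1,t₂;0,1], Ŝ₃ = !![1,0;t₃,1], Ŝ₄ = !![1,t₄;0,1], Ŝ₅ = !![1,0;t₅,1]. (This is the isomorphism M_B(⟨z^{5/3}⟩,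 1) ≅ M_B(⟨w^{5/2}⟩, 1) induced by the Fourier transform.) -/

import Mathlib

set_option maxHeartbeats 1000000
open Matrix

/-- The Betti moduli space `M_B(⟨z^{5/3}⟩, 1)`, as the set of tuples `(s₁,…,s₁₀) ∈ ℂ¹⁰`
(indexed by `Fin 10`) such that the ten unipotent Stokes matrices and the formal monodromy
`h = !![0,0,1; 1,0,0; 0,1,0]` satisfy `h·S₁₀·⋯·S₁ = 1`. -/
def mBFiveThirds : Set (Fin 10 → ℂ) :=
  {s | (!![0, 0, 1; 1, 0, 0; 0, 1, 0] : Matrix (Fin 3) (Fin 3) ℂ) *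
        (1 + Matrix.single 0 2 (s 9)) *
        (1 + Matrix.single 0 1 (s 8)) *
        (1 + Matrix.single 2 1 (s 7)) *
        (1 + Matrix.single 2 0 (s 6)) *
        (1 + Matrix.single 1 0 (s 5)) *
        (1 + Matrix.single 1 2 (s 4)) *
        (1 + Matrix.single 0 2 (s 3)) *
        (1 + Matrix.single 0 1 (s 2)) *
        (1 + Matrix.single 2 1 (s 1)) *
        (1 + Matrix.single 2 0 (s 0)) = 1}

/-- The Betti moduli space `M_B(⟨w^{5/2}⟩, 1)`, as the set of tuples `(t₁,…,t₅) ∈ ℂ⁵`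
(indexed by `Fin 5`) such that the five unipotent Stokes matrices and the formal monodromy
`ĥ = !![0,1;−1,0]` satisfy `ĥ·Ŝ₅·Ŝ₄·Ŝ₃·Ŝ₂·Ŝ₁ = 1`. -/
def mBFiveHalves : Set (Fin 5 → ℂ) :=
  {t | (!![0, 1; -1, 0] : Matrix (Fin 2) (Fin 2) ℂ) *
        !![1, 0; t 4, 1] * !![1, t 3; 0, 1] * !![1, 0; t 2, 1] *
        !![1, t 1; 0, 1] * !![1, 0; t 0, 1] = 1}

/-- The map induced by the Fourier transform:
`(s₁,…,s₁₀) ↦ (t₁,t₂,t₃,t₄,t₅) = (−s₆, −s₉, s₇, −s₅, −s₈)`. -/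
def fourierMap (s : Fin 10 → ℂ) : Fin 5 → ℂ :=
  ![-s 5, -s 8, s 6, -s 4, -s 7]

lemma fac02 (c : ℂ) : (1 + Matrix.single 0 2 c : Matrix (Fin 3) (Fin 3) ℂ) = !![1,0,c;0,1,0;0,0,1] := by
  ext i j; fin_cases i <;> fin_cases j <;> simp [Matrix.single, Matrix.one_apply, Matrix.vecHead, Matrix.vecTail]
lemma fac01 (c : ℂ) : (1 + Matrix.single 0 1 c : Matrix (Fin 3) (Fin 3) ℂ) = !![1,c,0;0,1,0;0,0,1] := by
  ext i j; fin_cases i <;> fin_cases j <;> simp [Matrix.single, Matrix.one_apply, Matrix.vecHead, Matrix.vecTail]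
lemma fac21 (c : ℂ) : (1 + Matrix.single 2 1 c : Matrix (Fin 3) (Fin 3) ℂ) = !![1,0,0;0,1,0;0,c,1] := by
  ext i j; fin_cases i <;> fin_cases j <;> simp [Matrix.single, Matrix.one_apply, Matrix.vecHead, Matrix.vecTail]
lemma fac20 (c : ℂ) : (1 + Matrix.single 2 0 c : Matrix (Fin 3) (Fin 3) ℂ) = !![1,0,0;0,1,0;c,0,1] := by
  ext i j; fin_cases i <;> fin_cases j <;> simp [Matrix.single, Matrix.one_apply, Matrix.vecHead, Matrix.vecTail]
lemma fac10 (c : ℂ) : (1 + Matrix.single 1 0 c : Matrix (Fin 3) (Fin 3) ℂ) = !![1,0,0;c,1,0;0,0,1] := by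
  ext i j; fin_cases i <;> fin_cases j <;> simp [Matrix.single, Matrix.one_apply, Matrix.vecHead, Matrix.vecTail]
lemma fac12 (c : ℂ) : (1 + Matrix.single 1 2 c : Matrix (Fin 3) (Fin 3) ℂ) = !![1,0,0;0,1,c;0,0,1] := by
  ext i j; fin_cases i <;> fin_cases j <;> simp [Matrix.single, Matrix.one_apply, Matrix.vecHead, Matrix.vecTail]

lemma eq3_iff {A B : Matrix (Fin 3) (Fin 3) ℂ} : A = B ↔ (A 0 0 = B 0 0 ∧ A 0 1 = B 0 1 ∧ A 0 2 = B 0 2 ∧ A 1 0 = B 1 0 ∧ A 1 1 = B 1 1 ∧ A 1 2 = B 1 2 ∧ A 2 0 = B 2 0 ∧ A 2 1 = B 2 1 ∧ A 2 2 = B 2 2) := by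
  constructor
  · rintro rfl; exact ⟨rfl,rfl,rfl,rfl,rfl,rfl,rfl,rfl,rfl⟩
  · rintro ⟨h1,h2,h3,h4,h5,h6,h7,h8,h9⟩; ext i j; fin_cases i <;> fin_cases j <;> assumption

lemma eq2_iff {A B : Matrix (Fin 2) (Fin 2) ℂ} : A = B ↔ (A 0 0 = B 0 0 ∧ A 0 1 = B 0 1 ∧ A 1 0 = B 1 0 ∧ A 1 1 = B 1 1) := by
  constructor
  · rintro rfl; exact ⟨rfl,rfl,rfl,rfl⟩
  · rintro ⟨h1,h2,h3,h4⟩; ext i j; fin_cases i <;> fin_cases j <;> assumption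

lemma thirds_iff (s : Fin 10 → ℂ) : s ∈ mBFiveThirds ↔
    (s 0 = -s 5 ∧ s 1 = s 5 * s 7 - 1 ∧ s 2 = -s 7 ∧ s 3 = -s 8 ∧
     s 4 = 1 + s 5 * s 8 ∧ s 6 = 1 - s 5 * s 7 ∧ s 9 = -1 - s 5 * s 8 ∧
     s 8 - s 7 - s 5 * s 7 * s 8 = 1) := by
  simp only [mBFiveThirds, Set.mem_setOf_eq, fac02, fac01, fac21, fac20, fac10, fac12]
  simp only [Matrix.mul_fin_three]
  rw [eq3_iff]
  simp [Matrix.one_apply]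
  constructor
  · rintro ⟨A1, A2, A3, B1, B2, B3, C1, C2, C3⟩
    have h6 : s 6 = 1 - s 5 * s 7 := by linear_combination A1 - s 0 * A3
    have h0 : s 0 = -s 5 := by linear_combination C1 - s 0 * C3
    have h2 : s 2 = -s 7 := by linear_combination A2 - s 1 * A3 - s 2 * h6
    have h1 : s 1 = s 5 * s 7 - 1 := by linear_combination C2 - s 1 * C3 - s 5 * h2
    have hD : 1 + s 9 * s 6 + (s 8 + s 9 * s 7) * s 5 = 0 := by linear_combination B1 - s 0 * B3
    have hE : s 8 + s 9 * s 7 = 1 := by linear_combination B2 - s 1 * B3 - s 2 * hD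
    have h9' : s 9 = -s 4 := by linear_combination B3 - s 3 * hD - s 4 * hE
    have h3 : s 3 = -s 8 := by linear_combination A3 - s 3 * h6 + hE - s 7 * h9'
    have h4 : s 4 = 1 + s 5 * s 8 := by linear_combination C3 - s 5 * h3
    have h9 : s 9 = -1 - s 5 * s 8 := by linear_combination h9' - h4
    have hG : s 8 - s 7 - s 5 * s 7 * s 8 = 1 := by linear_combination hE - s 7 * h9' + s 7 * h4
    exact ⟨h0, h1, h2, h3, h4, h6, h9, hG⟩
  · rintro ⟨h0, h1, h2, h3, h4, h6, h9, hG⟩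
    rw [h0, h1, h2, h3, h4, h6, h9]
    refine ⟨?_, ?_, ?_, ?_, ?_, ?_, ?_, ?_, ?_⟩
    · linear_combination s 5 * hG
    · linear_combination (1 - s 5 * s 7) * hG
    · linear_combination (-1 : ℂ) * hG
    · linear_combination (-s 5 - s 5 ^ 2 * s 8) * hG
    · linear_combination (-(s 5 * s 8) + s 5 * s 7 + s 5 ^ 2 * s 7 * s 8) * hG
    · linear_combination (1 + s 5 * s 8) * hG
    · ring
    · ring
    · ring

lemma halves_iff (t : Fin 5 → ℂ) : t ∈ mBFiveHalves ↔
    (t 0 = 1 + t 2 * t 3 ∧ t 1 = -1 - t 3 * t 4 ∧ t 4 + t 2 + t 2 * t 3 * t 4 = 1) := by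
  simp only [mBFiveHalves, Set.mem_setOf_eq, Matrix.mul_fin_two]
  rw [eq2_iff]
  simp [Matrix.one_apply]
  constructor
  · rintro ⟨K1, K2, K3, K4⟩
    have hq : t 4 + t 2 + t 2 * t 3 * t 4 = 1 := by linear_combination K1 - t 0 * K2
    have h1 : t 1 = -1 - t 3 * t 4 := by linear_combination K2 - t 1 * hq
    have h0 : t 0 = 1 + t 2 * t 3 := by linear_combination K3 - t 0 * K4
    exact ⟨h0, h1, hq⟩
  · rintro ⟨h0, h1, hq⟩
    rw [h0, h1]
    refine ⟨?_, ?_, ?_, ?_⟩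
    · linear_combination (-(t 3 * t 4) - t 2 * t 3 - t 2 * t 3 ^ 2 * t 4) * hq
    · linear_combination (-1 - t 3 * t 4) * hq
    · linear_combination (t 3 + t 2 * t 3 ^ 2) * hq
    · linear_combination t 3 * hq

/-- the Fourier transform rule `(s₁,…,s₁₀) ↦ (−s₆, −s₉, s₇, −s₅, −s₈)`
restricts to a bijection from `M_B(⟨z^{5/3}⟩, 1)` onto `M_B(⟨w^{5/2}⟩, 1)`. -/
theorem fourier_bijOn : Set.BijOn fourierMap mBFiveThirds mBFiveHalves := by
  refine ⟨?_, ?_, ?_⟩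
  · -- MapsTo
    intro s hs
    rw [thirds_iff] at hs
    obtain ⟨h0, h1, h2, h3, h4, h6, h9, hG⟩ := hs
    refine (halves_iff (fourierMap s)).mpr ⟨?_, ?_, ?_⟩
    · show -s 5 = 1 + s 6 * -s 4
      rw [h6, h4]; linear_combination s 5 * hG
    · show -s 8 = -1 - -s 4 * -s 7
      rw [h4]; linear_combination (-1 : ℂ) * hG
    · show -s 7 + s 6 + s 6 * -s 4 * -s 7 = 1
      rw [h6, h4]; linear_combination s 5 * s 7 * hG
  · -- InjOn
    intro s hs s' hs' h
    rw [thirds_iff] at hs hs'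
    obtain ⟨h0, h1, h2, h3, h4, h6, h9, hG⟩ := hs
    obtain ⟨h0', h1', h2', h3', h4', h6', h9', hG'⟩ := hs'
    have e5 : s 5 = s' 5 := by simpa [fourierMap] using congrFun h 0
    have e8 : s 8 = s' 8 := by simpa [fourierMap] using congrFun h 1
    have e7 : s 7 = s' 7 := by simpa [fourierMap] using congrFun h 4
    funext i; fin_cases i
    · show s 0 = s' 0; rw [h0, h0', e5]
    · show s 1 = s' 1; rw [h1, h1', e5, e7]
    · show s 2 = s' 2; rw [h2, h2', e7]
    · show s 3 = s' 3; rw [h3, h3', e8]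
    · show s 4 = s' 4; rw [h4, h4', e5, e8]
    · exact e5
    · show s 6 = s' 6; rw [h6, h6', e5, e7]
    · exact e7
    · exact e8
    · show s 9 = s' 9; rw [h9, h9', e5, e8]
  · -- SurjOn
    intro t ht
    rw [halves_iff] at ht
    obtain ⟨h0, h1, hq⟩ := ht
    refine ⟨![t 0, t 0 * t 4 - 1, t 4, t 1, 1 + t 0 * t 1, -t 0, 1 - t 0 * t 4, -t 4, -t 1,
      -1 - t 0 * t 1], ?_, ?_⟩
    · refine (thirds_iff _).mpr ⟨?_, ?_, ?_, ?_, ?_, ?_, ?_, ?_⟩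
      · show t 0 = -(-t 0); ring
      · show t 0 * t 4 - 1 = -t 0 * -t 4 - 1; ring
      · show t 4 = -(-t 4); ring
      · show t 1 = -(-t 1); ring
      · show 1 + t 0 * t 1 = 1 + -t 0 * -t 1; ring
      · show 1 - t 0 * t 4 = 1 - -t 0 * -t 4; ring
      · show -1 - t 0 * t 1 = -1 - -t 0 * -t 1; ring
      · show -t 1 - -t 4 - -t 0 * -t 4 * -t 1 = 1
        rw [h0, h1]; linear_combination -(t 3 * t 4) * hq
    · funext i; fin_cases i
      · show -(-t 0) = t 0; ring
      · show -(-t 1) = t 1; ring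
      · show 1 - t 0 * t 4 = t 2
        rw [h0]; linear_combination (-1 : ℂ) * hq
      · show -(1 + t 0 * t 1) = t 3
        rw [h0, h1]; linear_combination t 3 * hq
      · show -(-t 4) = t 4; ring
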